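/- A finite-dimensional unital Jordan superalgebra J over a field of characteristic 0 admits no surjective derivation: if δ ∈ Der J is surjective then J = 0. -/

import Mathlib

/-- The sign `(−1)^{ij}` attached to a pair of parities. -/
def eps (F : Type*) [Field F] (i j : ZMod 2) : F := if i = 1 ∧ j = 1 then -1 else 1

/-- A finite-dimensional unital Jordan superalgebra over a field of
characteristic `0` admits no surjective derivation: if `δ ∈ Der J` is
surjective then `J = 0`. -/
theorem no_surjective_derivation {F J : Type*} [Field F] [CharZero F]
    [AddCommGroup J] [Module F J] [FiniteDimensional F J]
    (m : J →ₗ[F] J →ₗ[F] J)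
    (g : ZMod 2 → Submodule F J)
    (one : J) (hone : ∀ x : J, m one x = x ∧ m x one = x) (honeg : one ∈ g 0)
    (hsupercomm : ∀ i j, ∀ a ∈ g i, ∀ b ∈ g j, m a b = eps F i j • m b a)
    (hjordan : ∀ pa pb pc pd, ∀ a ∈ g pa, ∀ b ∈ g pb, ∀ c ∈ g pc, ∀ d ∈ g pd,
      eps F pa pc • m (m a b) (m c d) + eps F pa pb • m (m b c) (m a d)
          + eps F pb pc • m (m c a) (m b d) =
        eps F pa pc • m a (m (m b c) d) + eps F pa pb • m b (m (m c a) d)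
          + eps F pb pc • m c (m (m a b) d))
    (δ : J →ₗ[F] J) (pδ : ZMod 2)
    (hδg : ∀ i, ∀ a ∈ g i, δ a ∈ g (i + pδ))
    (hδ : ∀ i j, ∀ a ∈ g i, ∀ b ∈ g j,
      δ (m a b) = m (δ a) b + eps F pδ i • m a (δ b))
    (hsurj : Function.Surjective δ) :
    ∀ x : J, x = 0 := by
  have heps : eps F pδ 0 = 1 := by
    simp [eps]
  have h := hδ 0 0 one honeg one honeg
  rw [(hone one).1, (hone (δ one)).2, heps, one_smul, (hone (δ one)).1] at h
  have hδone : δ one = 0 := (left_eq_add.mp h)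
  have hinj : Function.Injective δ := (LinearMap.injective_iff_surjective).2 hsurj
  have hone0 : one = 0 := hinj (by simp [hδone])
  intro x
  have := (hone x).1
  rw [hone0] at this
  simpa using this.symm
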